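/- In Baire space ω^ω, let Ψ enumerate bijectively the finite binary sequences that are empty or end in 1. Work in 𝕏 := 3^ω ∖ {α ∈ 2^ω : α(i) = 0 for all but finitely many i} and 𝕐 := 2^ω. Let 𝔹 := {(α,α) : α ∈ 2^ω, α(i) = 1 for infinitely many i} and 𝔸 := {(Ψ(m)⌢2⌢0^∞, Ψ(m)⌢0^∞) : m ∈ ω}. Then 𝔹 is not separable from 𝔸 by a countable union of sets Uᵢ × Vᵢ with Uᵢ open in 𝕏 and Vᵢ Fσ in 2^ω. -/

import Mathlib

open Set

def boolToTri : Bool → Fin 3 := fun b => if b then 1 else 0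

def embC : (ℕ → Bool) → (ℕ → Fin 3) := fun α i => boolToTri (α i)

def seqX (s : List Bool) : ℕ → Fin 3 := fun i =>
  if h : i < s.length then boolToTri (s.get ⟨i, h⟩) else if i = s.length then 2 else 0

def seqY (s : List Bool) : ℕ → Bool := fun i =>
  if h : i < s.length then s.get ⟨i, h⟩ else false

def IsFsigma {Z : Type*} [TopologicalSpace Z] (s : Set Z) : Prop :=
  ∃ C : ℕ → Set Z, (∀ n, IsClosed (C n)) ∧ s = ⋃ n, C n

namespace Stmt14Aux

/-- The basic clopen cylinder in Cantor space determined by a finite sequence. -/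
def cyl (t : List Bool) : Set (ℕ → Bool) := {y | ∀ j, j < t.length → y j = t.getD j false}

lemma seqY_eq (s : List Bool) (i : ℕ) : seqY s i = s.getD i false := by
  unfold seqY
  split
  · next h => rw [List.getD_eq_getElem s false h]; rfl
  · next h => rw [List.getD_eq_default]; omega

lemma getD_prefix {s t : List Bool} (h : s <+: t) {j : ℕ} (hj : j < s.length) :
    t.getD j false = s.getD j false := by
  rw [List.getD_eq_getElem t false (lt_of_lt_of_le hj h.length_le),
    List.getD_eq_getElem s false hj, h.getElem hj]

lemma seqY_mem_cyl {s t : List Bool} (h : t <+: s) : seqY s ∈ cyl t := by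
  intro j hj
  rw [seqY_eq, getD_prefix h hj]

open Classical in
noncomputable def bs (C : ℕ → ℕ → Set (ℕ → Bool)) : ℕ → List Bool
  | 0 => []
  | (k+1) =>
    if h : ∃ t : List Bool, (bs C k ++ [true]) <+: t ∧ t.getLast? = some true ∧
        ∀ y ∈ cyl t, y ∉ C (Nat.unpair k).1 (Nat.unpair k).2
    then h.choose
    else bs C k ++ [true]

variable (C : ℕ → ℕ → Set (ℕ → Bool))

lemma bs_succ (k : ℕ) :
    (bs C k ++ [true]) <+: bs C (k+1) ∧ (bs C (k+1)).getLast? = some true := by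
  rw [bs]
  split
  · next h => exact ⟨h.choose_spec.1, h.choose_spec.2.1⟩
  · exact ⟨List.prefix_refl _, List.getLast?_concat⟩

lemma bs_case (k : ℕ) :
    (∀ y ∈ cyl (bs C (k+1)), y ∉ C (Nat.unpair k).1 (Nat.unpair k).2) ∨
    (∀ t : List Bool, (bs C k ++ [true]) <+: t → t.getLast? = some true →
      ∃ y ∈ cyl t, y ∈ C (Nat.unpair k).1 (Nat.unpair k).2) := by
  rw [bs]
  split
  · next h => exact Or.inl h.choose_spec.2.2
  · next h => right; push_neg at h; exact h

lemma bs_prefix {k l : ℕ} (h : k ≤ l) : bs C k <+: bs C l := by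
  induction l with
  | zero => simp_all
  | succ m ih =>
    rcases Nat.lt_or_ge k (m+1) with h' | h'
    · exact ((ih (by omega)).trans (List.prefix_append _ _)).trans (bs_succ C m).1
    · have : k = m + 1 := by omega
      subst this; exact List.prefix_refl _

lemma bs_len (k : ℕ) : k ≤ (bs C k).length := by
  induction k with
  | zero => simp
  | succ m ih =>
    have := (bs_succ C m).1.length_le
    simp at this
    omega

end Stmt14Aux

open Stmt14Aux Filter

/-- In `𝕏 = 3^ω ∖ {α ∈ 2^ω : α eventually 0}` and `𝕐 = 2^ω`, with `Ψ` enumerating the finite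
binary sequences that are empty or end in `1`, the set `𝔹 = {(α,α) : α ∈ 2^ω with infinitely
many 1's}` is not separable from `𝔸 = {(Ψ(m)⌢2⌢0^∞, Ψ(m)⌢0^∞)}` by a countable union of
rectangles `Uᵢ × Vᵢ` with `Uᵢ` open in `𝕏` and `Vᵢ` Fσ in `2^ω`. -/
theorem stmt14 (Ψ : ℕ → List Bool) (hΨinj : Function.Injective Ψ)
    (hΨrange : Set.range Ψ = {s : List Bool | s = [] ∨ s.getLast? = some true})
    (𝔹 𝔸 : Set ({α : ℕ → Fin 3 // ¬ ((∀ i, α i ≠ 2) ∧ ∃ N, ∀ i ≥ N, α i = 0)} × (ℕ → Bool)))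
    (h𝔹 : 𝔹 = {p | p.1.1 = embC p.2 ∧ {i | p.2 i = true}.Infinite})
    (h𝔸 : 𝔸 = {p | ∃ m, p.1.1 = seqX (Ψ m) ∧ p.2 = seqY (Ψ m)})
    (U : ℕ → Set {α : ℕ → Fin 3 // ¬ ((∀ i, α i ≠ 2) ∧ ∃ N, ∀ i ≥ N, α i = 0)})
    (V : ℕ → Set (ℕ → Bool))
    (hU : ∀ i, IsOpen (U i)) (hV : ∀ i, IsFsigma (V i))
    (hcover : 𝔹 ⊆ ⋃ i, (U i) ×ˢ (V i)) :
    ((⋃ i, (U i) ×ˢ (V i)) ∩ 𝔸).Nonempty := by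
  by_contra hne
  rw [Set.not_nonempty_iff_eq_empty] at hne
  choose C hCcl hCV using hV
  -- every seqX lies in the space 𝕏
  have hXseqX : ∀ s : List Bool, ¬ ((∀ i, seqX s i ≠ 2) ∧ ∃ N, ∀ i ≥ N, seqX s i = 0) := by
    rintro s ⟨h1, -⟩
    exact h1 s.length (by simp [seqX])
  -- the assumption: points of 𝔸 are not covered
  have H : ∀ t : List Bool, t.getLast? = some true → ∀ i,
      (⟨seqX t, hXseqX t⟩ : {α : ℕ → Fin 3 // ¬ ((∀ i, α i ≠ 2) ∧ ∃ N, ∀ i ≥ N, α i = 0)}) ∈ U i →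
      seqY t ∉ V i := by
    intro t ht i hUi hVi
    have htr : t ∈ Set.range Ψ := by rw [hΨrange]; exact Or.inr ht
    obtain ⟨m, rfl⟩ := htr
    have hmem : ((⟨seqX (Ψ m), hXseqX _⟩, seqY (Ψ m)) :
        {α : ℕ → Fin 3 // ¬ ((∀ i, α i ≠ 2) ∧ ∃ N, ∀ i ≥ N, α i = 0)} × (ℕ → Bool)) ∈
        (⋃ i, (U i) ×ˢ (V i)) ∩ 𝔸 := by
      refine ⟨Set.mem_iUnion.2 ⟨i, hUi, hVi⟩, ?_⟩
      rw [h𝔸]; exact ⟨m, rfl, rfl⟩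
    rw [hne] at hmem
    exact hmem
  -- the limit sequence
  set α : ℕ → Bool := fun j => (bs C (j+1)).getD j false with hα
  have hacyl : ∀ k, α ∈ cyl (bs C k) := by
    intro k j hj
    simp only [hα]
    rcases le_total (j+1) k with h | h
    · exact (getD_prefix (bs_prefix C h) (lt_of_lt_of_le (Nat.lt_succ_self j) (bs_len C (j+1)))).symm
    · exact getD_prefix (bs_prefix C h) hj
  have htrue : ∀ N : ℕ, ∃ j, N ≤ j ∧ α j = true := by
    intro N
    have hlenN := bs_len C (N+1)
    set t := bs C (N+1) with ht
    have hlt : t.length - 1 < t.length := by omega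
    refine ⟨t.length - 1, by omega, ?_⟩
    have h1 : α (t.length - 1) = t.getD (t.length - 1) false := hacyl (N+1) _ hlt
    have h2 : t.getLast? = some true := (bs_succ C N).2
    rw [List.getLast?_eq_getElem?, List.getElem?_eq_getElem hlt] at h2
    rw [h1, List.getD_eq_getElem t false hlt]
    exact Option.some.inj h2
  have hinf : {i | α i = true}.Infinite := by
    apply Set.infinite_of_not_bddAbove
    rintro ⟨b, hb⟩
    obtain ⟨j, hj, hja⟩ := htrue (b+1)
    exact absurd (hb hja) (by omega)
  have hXα : ¬ ((∀ i, embC α i ≠ 2) ∧ ∃ N, ∀ i ≥ N, embC α i = 0) := by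
    rintro ⟨-, N, hN⟩
    obtain ⟨j, hj, hja⟩ := htrue N
    have := hN j hj
    simp [embC, boolToTri, hja] at this
  -- seqX (bs C l) converges to embC α in the subtype
  have htendsto : Tendsto (fun l => (⟨seqX (bs C l), hXseqX _⟩ :
      {α : ℕ → Fin 3 // ¬ ((∀ i, α i ≠ 2) ∧ ∃ N, ∀ i ≥ N, α i = 0)})) atTop
      (nhds ⟨embC α, hXα⟩) := by
    rw [Topology.IsEmbedding.subtypeVal.tendsto_nhds_iff]
    rw [show Subtype.val ∘ (fun l => (⟨seqX (bs C l), hXseqX _⟩ :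
      {α : ℕ → Fin 3 // ¬ ((∀ i, α i ≠ 2) ∧ ∃ N, ∀ i ≥ N, α i = 0)})) = fun l => seqX (bs C l)
      from rfl]
    rw [tendsto_pi_nhds]
    intro j
    refine Tendsto.congr' ?_ tendsto_const_nhds
    filter_upwards [eventually_ge_atTop (j+1)] with l hl
    have hjl : j < (bs C l).length := lt_of_lt_of_le hl (bs_len C l)
    have h1 : seqX (bs C l) j = boolToTri ((bs C l).getD j false) := by
      simp only [seqX, dif_pos hjl]
      rw [List.getD_eq_getElem _ false hjl]
      rfl
    rw [h1, ← hacyl l j hjl]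
    rfl
  -- (embC α, α) ∈ 𝔹 is covered
  have hBmem : ((⟨embC α, hXα⟩, α) :
      {α : ℕ → Fin 3 // ¬ ((∀ i, α i ≠ 2) ∧ ∃ N, ∀ i ≥ N, α i = 0)} × (ℕ → Bool)) ∈ 𝔹 := by
    rw [h𝔹]; exact ⟨rfl, hinf⟩
  obtain ⟨i, hi⟩ := Set.mem_iUnion.1 (hcover hBmem)
  obtain ⟨n, hn⟩ := Set.mem_iUnion.1 ((hCV i) ▸ hi.2)
  set k := Nat.pair i n with hk
  have hk1 : (Nat.unpair k).1 = i := by rw [hk, Nat.unpair_pair]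
  have hk2 : (Nat.unpair k).2 = n := by rw [hk, Nat.unpair_pair]
  rcases bs_case C k with hA | hB
  · rw [hk1, hk2] at hA
    exact hA α (hacyl (k+1)) hn
  · rw [hk1, hk2] at hB
    -- in this case every seqY of a suitable extension is in C i n
    have hmem : ∀ t : List Bool, (bs C k ++ [true]) <+: t → seqY t ∈ C i n := by
      intro t ht
      have hz : ∀ m : ℕ, ∃ y ∈ cyl (t ++ (List.replicate m false ++ [true])), y ∈ C i n := by
        intro m
        refine hB _ (ht.trans (List.prefix_append _ _)) ?_
        rw [← List.append_assoc]
        exact List.getLast?_concat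
      choose z hz1 hz2 using hz
      have htz : Tendsto z atTop (nhds (seqY t)) := by
        rw [tendsto_pi_nhds]
        intro j
        refine Tendsto.congr' ?_ tendsto_const_nhds
        filter_upwards [eventually_ge_atTop (j+1)] with m hm
        rcases lt_or_ge j t.length with hj | hj
        · rw [hz1 m j (by simp; omega), seqY_eq, List.getD_append _ _ _ j hj]
        · have hj2 : j < (t ++ (List.replicate m false ++ [true])).length := by simp; omega
          rw [hz1 m j hj2, seqY_eq t j, List.getD_eq_default _ _ hj,
            List.getD_append_right _ _ _ _ hj,
            List.getD_append _ _ _ _ (by simp [List.length_replicate]; omega)]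
          rw [List.getD_eq_getElem _ false (by simp [List.length_replicate]; omega),
            List.getElem_replicate]
      exact (hCcl i n).mem_of_tendsto htz (Eventually.of_forall hz2)
    -- hence embC α is not in U i, contradiction
    have hnotU : (⟨embC α, hXα⟩ :
        {α : ℕ → Fin 3 // ¬ ((∀ i, α i ≠ 2) ∧ ∃ N, ∀ i ≥ N, α i = 0)}) ∈ (U i)ᶜ := by
      refine (hU i).isClosed_compl.mem_of_tendsto htendsto ?_
      filter_upwards [eventually_ge_atTop (k+1)] with l hl
      have hpre : (bs C k ++ [true]) <+: bs C l := (bs_succ C k).1.trans (bs_prefix C hl)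
      have hCmem : seqY (bs C l) ∈ C i n := hmem _ hpre
      have hVmem : seqY (bs C l) ∈ V i := by rw [hCV i]; exact Set.mem_iUnion.2 ⟨n, hCmem⟩
      have hlast : (bs C l).getLast? = some true := by
        obtain ⟨l', rfl⟩ : ∃ l', l = l' + 1 := ⟨l - 1, by omega⟩
        exact (bs_succ C l').2
      exact fun hUm => H _ hlast i hUm hVmem
    exact hnotU hi.1
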